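/- arXiv:1908.08324 — 2 statements merged into one kernel-verified Lean document; each statement's English description precedes it below -/
import Mathlib

section
/- Let H be a simply connected combinatorial strata structure endowed with a datum (N, {P_J}) of nodal strata, and let B be a nodal separating block of N in H. Let i, j ∈ I be two distinct indices such that A_B(i) = A_B(j). Assume there exists a 2-path ω = (K_0, K_1, …, K_u) in H with support contained in B such that i ∈ K_0 and j ∈ K_u. Then there is a 1-path β in H joining {i} and {j} such that no entry of the subsupport Sub(β) belongs to N. In particular κ_B(β) = 0. -/
/-- A combinatorial strata structure with minimal set of indices the (finite) type `I`:
an open subset of `𝒫(I)` (i.e. a family closed under taking subsets) containing all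
singletons. -/
def IsCSS {I : Type*} (H : Set (Finset I)) : Prop :=
  (∀ J ∈ H, ∀ J' : Finset I, J' ⊆ J → J' ∈ H) ∧ ∀ i : I, ({i} : Finset I) ∈ H

/-- `level H k` is `H(k)`, the set of strata of `H` with exactly `k` elements. -/
def level {I : Type*} (H : Set (Finset I)) (k : ℕ) : Set (Finset I) :=
  {J ∈ H | J.card = k}

/-- A `k`-path in `H`: a nonempty sequence of strata of `H(k)` such that the union of
any two consecutive entries lies in `H(k+1)`. -/
def IsKPath {I : Type*} [DecidableEq I] (H : Set (Finset I)) (k : ℕ)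
    (γ : List (Finset I)) : Prop :=
  γ ≠ [] ∧ (∀ J ∈ γ, J ∈ level H k) ∧
    γ.Chain' fun J J' => (J ∪ J') ∈ level H (k + 1)

/-- The path `γ` joins `J` and `J'`. -/
def Joins {I : Type*} (γ : List (Finset I)) (J J' : Finset I) : Prop :=
  γ.head? = some J ∧ γ.getLast? = some J'

/-- The subsupport of a path: the sequence of unions of consecutive entries. -/
def subSup {I : Type*} [DecidableEq I] (γ : List (Finset I)) : List (Finset I) :=
  List.zipWith (· ∪ ·) γ γ.tail

open Classical in
/-- `kappa B γ`: the number of entries of the subsupport of `γ` that belong to `B`. -/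
noncomputable def kappa {I : Type*} [DecidableEq I] (B : Set (Finset I))
    (γ : List (Finset I)) : ℕ :=
  (subSup γ).countP fun J => decide (J ∈ B)

/-- `A` is `k`-connected in `H`: any two elements of `A` are joined by a `k`-path in `H`
with support contained in `A`. -/
def KConnectedIn {I : Type*} [DecidableEq I] (H : Set (Finset I)) (k : ℕ)
    (A : Set (Finset I)) : Prop :=
  ∀ J ∈ A, ∀ J' ∈ A, ∃ γ : List (Finset I),
    IsKPath H k γ ∧ Joins γ J J' ∧ ∀ K ∈ γ, K ∈ A

/-- `C` is a `k`-connected component of `A` in `H`: a maximal nonempty `k`-connected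
subset of `A`. -/
def IsKComponent {I : Type*} [DecidableEq I] (H : Set (Finset I)) (k : ℕ)
    (A C : Set (Finset I)) : Prop :=
  C.Nonempty ∧ C ⊆ A ∧ KConnectedIn H k C ∧
    ∀ C' : Set (Finset I), C ⊆ C' → C' ⊆ A → KConnectedIn H k C' → C' = C

/-- `H` is 1-connected: `H(1)` is 1-connected in `H`. -/
def OneConnected {I : Type*} [DecidableEq I] (H : Set (Finset I)) : Prop :=
  KConnectedIn H 1 (level H 1)

/-- One-sided version of an elementary homotopic pair of 1-paths in `H`. -/
def ElemPairCore {I : Type*} [DecidableEq I] (H : Set (Finset I))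
    (ε ε' : List (Finset I)) : Prop :=
  ε = ε'
  ∨ (∃ i₁ i₂ : I, ε = [{i₁}, {i₂}, {i₁}] ∧ ε' = [{i₁}])
  ∨ (∃ i₁ i₂ i₃ : I, ε = [{i₁}, {i₂}] ∧ ε' = [{i₁}, {i₃}, {i₂}] ∧
      IsKPath H 2 [{i₁, i₃}, {i₃, i₂}])

/-- An elementary homotopic pair of 1-paths in `H` (up to swapping the two paths). -/
def ElemPair {I : Type*} [DecidableEq I] (H : Set (Finset I))
    (ε ε' : List (Finset I)) : Prop :=
  ElemPairCore H ε ε' ∨ ElemPairCore H ε' ε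

/-- `γ₂` is obtained from `γ₁` by an elementary homotopy. -/
def ElemHomotopy {I : Type*} [DecidableEq I] (H : Set (Finset I))
    (γ₁ γ₂ : List (Finset I)) : Prop :=
  ∃ δ ε₁ ε₂ ρ : List (Finset I),
    ElemPair H ε₁ ε₂ ∧ γ₁ = δ ++ ε₁ ++ ρ ∧ γ₂ = δ ++ ε₂ ++ ρ

/-- `γ` and `γ'` are homotopically equivalent in `H` with support in `A`: they are linked
by a finite chain of elementary homotopies in which every intermediate 1-path has
support in `A`. -/
def HomotopicIn {I : Type*} [DecidableEq I] (H A : Set (Finset I))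
    (γ γ' : List (Finset I)) : Prop :=
  (IsKPath H 1 γ ∧ ∀ J ∈ γ, J ∈ A) ∧
    Relation.ReflTransGen
      (fun g₁ g₂ => ElemHomotopy H g₁ g₂ ∧ IsKPath H 1 g₂ ∧ ∀ J ∈ g₂, J ∈ A) γ γ'

/-- A 1-connected subset `A ⊆ H(1)` is simply connected in `H`: any two 1-paths in `H`
with support in `A` joining the same strata are homotopically equivalent in `H` with
support in `A`. -/
def SimplyConnectedIn {I : Type*} [DecidableEq I] (H A : Set (Finset I)) : Prop :=
  KConnectedIn H 1 A ∧
    ∀ γ γ' : List (Finset I), IsKPath H 1 γ → IsKPath H 1 γ' →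
      (∀ J ∈ γ, J ∈ A) → (∀ J ∈ γ', J ∈ A) →
      γ.head? = γ'.head? → γ.getLast? = γ'.getLast? →
      HomotopicIn H A γ γ'

/-- `H` is simply connected: `H(1)` is simply connected in `H`. -/
def SimplyConnected {I : Type*} [DecidableEq I] (H : Set (Finset I)) : Prop :=
  SimplyConnectedIn H (level H 1)

/-- The closure of `A` in `H`: the strata of `H` containing some element of `A`. -/
def Cl {I : Type*} (H A : Set (Finset I)) : Set (Finset I) :=
  {J' ∈ H | ∃ J ∈ A, J ⊆ J'}

/-- A datum of nodal strata `(N, {P_J})` in `H`: a subset `N ⊆ H` together with, for each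
`J ∈ N`, a partition `P_J = {J₊, J₋}` of `J` into two nonempty parts, such that for every
`J ∈ N` and `J' ⊆ J` one has `J' ∈ N` iff `J' ∩ J₊ ≠ ∅ ≠ J' ∩ J₋`, and in that case
`P_{J'} = {J' ∩ J₊, J' ∩ J₋}`. -/
structure NodalDatum {I : Type*} [DecidableEq I] (H : Set (Finset I)) : Type _ where
  N : Set (Finset I)
  N_sub : N ⊆ H
  plus : Finset I → Finset I
  minus : Finset I → Finset I
  plus_nonempty : ∀ J ∈ N, (plus J).Nonempty
  minus_nonempty : ∀ J ∈ N, (minus J).Nonempty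
  union_eq : ∀ J ∈ N, plus J ∪ minus J = J
  disj : ∀ J ∈ N, Disjoint (plus J) (minus J)
  mem_iff : ∀ J ∈ N, ∀ J' : Finset I, J' ⊆ J →
    (J' ∈ N ↔ (J' ∩ plus J).Nonempty ∧ (J' ∩ minus J).Nonempty)
  part_eq : ∀ J ∈ N, ∀ J' : Finset I, J' ⊆ J → J' ∈ N →
    ({plus J', minus J'} : Set (Finset I)) = {J' ∩ plus J, J' ∩ minus J}

/-- `N*`: the set of uninterrupted nodal strata, i.e. `J ∈ N` with `Cl_H({J}) ⊆ N`. -/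
def Nstar {I : Type*} [DecidableEq I] {H : Set (Finset I)} (D : NodalDatum H) :
    Set (Finset I) :=
  {J ∈ D.N | ∀ J' ∈ H, J ⊆ J' → J' ∈ D.N}

/-- A nodal block of `N` in `H`: a 2-connected component of `N(2) = N ∩ H(2)` in `H`. -/
def IsNodalBlock {I : Type*} [DecidableEq I] {H : Set (Finset I)} (D : NodalDatum H)
    (B : Set (Finset I)) : Prop :=
  IsKComponent H 2 (D.N ∩ level H 2) B

/-- A nodal separating block: a nodal block contained in `N*`. -/
def IsSepBlock {I : Type*} [DecidableEq I] {H : Set (Finset I)} (D : NodalDatum H)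
    (B : Set (Finset I)) : Prop :=
  IsNodalBlock D B ∧ B ⊆ Nstar D

/-- The separator set: the union of all nodal separating blocks. -/
def SepSet {I : Type*} [DecidableEq I] {H : Set (Finset I)} (D : NodalDatum H) :
    Set (Finset I) :=
  ⋃₀ {B | IsSepBlock D B}

/-- `A_B(i)`: the set of `{j} ∈ H(1)` joined to `{i}` by a 1-path `γ` in `H` with
`κ_B(γ)` even. -/
def ABset {I : Type*} [DecidableEq I] (H B : Set (Finset I)) (i : I) : Set (Finset I) :=
  {J ∈ level H 1 | ∃ γ : List (Finset I),
    IsKPath H 1 γ ∧ Joins γ {i} J ∧ Even (kappa B γ)}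

/-- `B_B(i)`: the set of `{j} ∈ H(1)` joined to `{i}` by a 1-path `γ` in `H` with
`κ_B(γ)` odd. -/
def BBset {I : Type*} [DecidableEq I] (H B : Set (Finset I)) (i : I) : Set (Finset I) :=
  {J ∈ level H 1 | ∃ γ : List (Finset I),
    IsKPath H 1 γ ∧ Joins γ {i} J ∧ Odd (kappa B γ)}

section AuxLemmas

open List

set_option linter.unusedSectionVars false

variable {I : Type*} [DecidableEq I]

lemma mem_of_getLast?_eq {α : Type*} {l : List α} {a : α} (h : l.getLast? = some a) :
    a ∈ l := by
  obtain ⟨h', rfl⟩ := List.mem_getLast?_eq_getLast (l := l) (x := a) h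
  exact List.getLast_mem h'

lemma subSup_cons_cons (a b : Finset I) (l : List (Finset I)) :
    subSup (a :: b :: l) = (a ∪ b) :: subSup (b :: l) := rfl

lemma subSup_append (l₁ l₂ : List (Finset I)) :
    subSup (l₁ ++ l₂) = subSup l₁ ++
      (List.zipWith (· ∪ ·) l₁.getLast?.toList l₂.head?.toList) ++ subSup l₂ := by
  induction l₁ with
  | nil => simp [subSup]
  | cons a l₁ ih =>
    cases l₁ with
    | nil =>
      cases l₂ with
      | nil => simp [subSup]
      | cons b l₂ => simp [subSup]
    | cons c l₁' =>
      rw [show (a :: c :: l₁') ++ l₂ = a :: c :: (l₁' ++ l₂) by simp, subSup_cons_cons,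
        show c :: (l₁' ++ l₂) = (c :: l₁') ++ l₂ by simp, ih, subSup_cons_cons,
        List.getLast?_cons_cons]
      simp [List.append_assoc]

open Classical in
noncomputable def bcnt (B : Set (Finset I)) (l : List (Finset I)) : ℕ :=
  l.countP fun J => decide (J ∈ B)

lemma kappa_eq (B : Set (Finset I)) (γ : List (Finset I)) :
    kappa B γ = bcnt B (subSup γ) := rfl

lemma bcnt_nil (B : Set (Finset I)) : bcnt B [] = 0 := rfl

open Classical in
lemma bcnt_cons (B : Set (Finset I)) (a : Finset I) (l : List (Finset I)) :
    bcnt B (a :: l) = (if a ∈ B then 1 else 0) + bcnt B l := by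
  simp only [bcnt, List.countP_cons, decide_eq_true_eq]
  omega

lemma bcnt_append (B : Set (Finset I)) (l₁ l₂ : List (Finset I)) :
    bcnt B (l₁ ++ l₂) = bcnt B l₁ + bcnt B l₂ := by
  simp [bcnt, List.countP_append]

open Classical in
lemma kappa_append (B : Set (Finset I)) (l₁ l₂ : List (Finset I)) :
    kappa B (l₁ ++ l₂) = kappa B l₁ +
      bcnt B (List.zipWith (· ∪ ·) l₁.getLast?.toList l₂.head?.toList) + kappa B l₂ := by
  simp only [kappa_eq, subSup_append, bcnt_append]

lemma bcnt_eq_zero {B : Set (Finset I)} {l : List (Finset I)}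
    (h : ∀ a ∈ l, a ∉ B) : bcnt B l = 0 := by
  apply List.countP_eq_zero.mpr
  intro a ha
  simp only [decide_eq_true_eq]
  exact h a ha

lemma IsKPath.reverse' {H : Set (Finset I)} {k : ℕ} {γ : List (Finset I)}
    (h : IsKPath H k γ) : IsKPath H k γ.reverse := by
  refine ⟨by simpa using h.1, fun J hJ => h.2.1 J (by simpa using hJ), ?_⟩
  rw [List.Chain', List.isChain_reverse]
  refine h.2.2.imp fun a b hab => ?_
  show (b ∪ a) ∈ level H (k + 1)
  rwa [Finset.union_comm]

lemma Joins.reverse' {γ : List (Finset I)} {J J' : Finset I}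
    (h : Joins γ J J') : Joins γ.reverse J' J :=
  ⟨by rw [List.head?_reverse]; exact h.2, by rw [List.getLast?_reverse]; exact h.1⟩

lemma chain'_middle {α : Type*} {R : α → α → Prop} :
    ∀ (δ : List α) {x y : α} {ρ : List α}, List.Chain' R (δ ++ x :: y :: ρ) → R x y
  | [], _, _, _, h => (List.isChain_cons_cons.mp h).1
  | _ :: δ, _, _, _, h => chain'_middle δ h.tail

/-- A stratum of `N(2)` adjacent to a nodal block belongs to the block. -/
lemma absorb {H : Set (Finset I)} {D : NodalDatum H} {B : Set (Finset I)}
    (hB : IsNodalBlock D B) {e K : Finset I} (he : e ∈ D.N) (he2 : e ∈ level H 2)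
    (hK : K ∈ B) (hadj : e ∪ K ∈ level H 3) : e ∈ B := by
  obtain ⟨hne, hsub, hconn, hmax⟩ := hB
  have hkey : ∀ J ∈ B, ∃ γ, IsKPath H 2 γ ∧ Joins γ e J ∧ ∀ L ∈ γ, L ∈ insert e B := by
    intro J hJ
    obtain ⟨p, hp, hpj, hpB⟩ := hconn K hK J hJ
    refine ⟨e :: p, ⟨by simp, ?_, ?_⟩, ⟨rfl, ?_⟩, ?_⟩
    · intro L hL
      rcases List.mem_cons.mp hL with rfl | hL
      · exact he2
      · exact hp.2.1 L hL
    · refine List.isChain_cons.mpr ⟨?_, hp.2.2⟩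
      intro y hy
      rw [hpj.1] at hy
      obtain rfl : K = y := by simpa using hy
      exact hadj
    · show ([e] ++ p).getLast? = some J
      rw [List.getLast?_append_of_ne_nil _ hp.1]
      exact hpj.2
    · intro L hL
      rcases List.mem_cons.mp hL with rfl | hL
      · exact Set.mem_insert _ _
      · exact Set.mem_insert_iff.mpr (Or.inr (hpB L hL))
  have hconn' : KConnectedIn H 2 (insert e B) := by
    intro J hJ J' hJ'
    rcases Set.mem_insert_iff.mp hJ with hJe | hJB
    · rcases Set.mem_insert_iff.mp hJ' with hJ'e | hJ'B
      · refine ⟨[J], ⟨by simp, ?_, List.isChain_singleton _⟩, ⟨rfl, ?_⟩, ?_⟩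
        · intro L hL
          obtain rfl : L = J := by simpa using hL
          rw [hJe]; exact he2
        · simp [hJe, hJ'e]
        · intro L hL
          obtain rfl : L = J := by simpa using hL
          rw [hJe]; exact Set.mem_insert _ _
      · rw [hJe]
        exact hkey J' hJ'B
    · rcases Set.mem_insert_iff.mp hJ' with hJ'e | hJ'B
      · obtain ⟨γ, h1, h2, h3⟩ := hkey J hJB
        rw [hJ'e]
        exact ⟨γ.reverse, h1.reverse', h2.reverse', fun L hL => h3 L (by simpa using hL)⟩
      · obtain ⟨γ, h1, h2, h3⟩ := hconn J hJB J' hJ'B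
        exact ⟨γ, h1, h2, fun L hL => Set.mem_insert_iff.mpr (Or.inr (h3 L hL))⟩
  have heq := hmax (insert e B) (Set.subset_insert _ _) ?_ hconn'
  · rw [← heq]; exact Set.mem_insert _ _
  · intro L hL
    rcases Set.mem_insert_iff.mp hL with rfl | hL
    · exact ⟨he, he2⟩
    · exact hsub hL

lemma pair_inter_nonempty (a b : I) (P : Finset I) :
    (({a, b} : Finset I) ∩ P).Nonempty ↔ a ∈ P ∨ b ∈ P := by
  constructor
  · rintro ⟨x, hx⟩
    simp only [Finset.mem_inter, Finset.mem_insert, Finset.mem_singleton] at hx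
    rcases hx.1 with rfl | rfl
    · exact Or.inl hx.2
    · exact Or.inr hx.2
  · rintro (h | h)
    · exact ⟨a, by simp [h]⟩
    · exact ⟨b, by simp [h]⟩

lemma edge_mem_N {H : Set (Finset I)} (D : NodalDatum H) {T : Finset I} (hT : T ∈ D.N)
    {a b : I} (ha : a ∈ T) (hb : b ∈ T) :
    (({a, b} : Finset I) ∈ D.N ↔ ¬ (a ∈ D.plus T ↔ b ∈ D.plus T)) := by
  have hsub : ({a, b} : Finset I) ⊆ T := by
    intro x hx
    simp only [Finset.mem_insert, Finset.mem_singleton] at hx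
    rcases hx with rfl | rfl <;> assumption
  rw [D.mem_iff T hT _ hsub, pair_inter_nonempty, pair_inter_nonempty]
  have hU := D.union_eq T hT
  have hD := D.disj T hT
  have hmem : ∀ x ∈ T, (x ∈ D.plus T ↔ x ∉ D.minus T) := by
    intro x hx
    have hx' : x ∈ D.plus T ∪ D.minus T := by rw [hU]; exact hx
    rcases Finset.mem_union.mp hx' with h | h
    · exact ⟨fun _ h' => Finset.disjoint_left.mp hD h h', fun _ => h⟩
    · exact ⟨fun h' h'' => Finset.disjoint_left.mp hD h' h'', fun h' => (h' h).elim⟩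
  have Ha := hmem a ha
  have Hb := hmem b hb
  tauto

end AuxLemmas

section AuxLemmas2

set_option linter.unusedSectionVars false
set_option maxHeartbeats 1000000

open List

variable {I : Type*} [DecidableEq I]

open Classical in
lemma triangle_parity {H : Set (Finset I)} {D : NodalDatum H} {B : Set (Finset I)}
    (hB : IsSepBlock D B) (i₁ i₂ i₃ : I)
    (h12 : ({i₁, i₂} : Finset I) ∈ level H 2)
    (h13 : ({i₁, i₃} : Finset I) ∈ level H 2)
    (h32 : ({i₃, i₂} : Finset I) ∈ level H 2)
    (hT : (({i₁, i₃} ∪ {i₃, i₂}) : Finset I) ∈ level H 3) :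
    ((if ({i₁, i₂} : Finset I) ∈ B then 1 else 0) : ℕ) % 2 =
      ((if ({i₁, i₃} : Finset I) ∈ B then 1 else 0) +
       (if ({i₃, i₂} : Finset I) ∈ B then 1 else 0)) % 2 := by
  set T : Finset I := {i₁, i₃} ∪ {i₃, i₂} with hTdef
  have h1T : i₁ ∈ T := by simp [hTdef]
  have h2T : i₂ ∈ T := by simp [hTdef]
  have h3T : i₃ ∈ T := by simp [hTdef]
  have hs12 : ({i₁, i₂} : Finset I) ⊆ T := by
    intro x hx
    simp only [Finset.mem_insert, Finset.mem_singleton] at hx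
    rcases hx with rfl | rfl <;> assumption
  have hs13 : ({i₁, i₃} : Finset I) ⊆ T := Finset.subset_union_left
  have hs32 : ({i₃, i₂} : Finset I) ⊆ T := Finset.subset_union_right
  by_cases hany : ({i₁, i₂} : Finset I) ∈ B ∨ ({i₁, i₃} : Finset I) ∈ B ∨
      ({i₃, i₂} : Finset I) ∈ B
  · have hBsub : B ⊆ D.N ∩ level H 2 := hB.1.2.1
    obtain ⟨eb, hebB, hebT⟩ : ∃ eb, eb ∈ B ∧ eb ⊆ T := by
      rcases hany with h | h | h
      exacts [⟨_, h, hs12⟩, ⟨_, h, hs13⟩, ⟨_, h, hs32⟩]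
    have hTH : T ∈ H := hT.1
    have hTN : T ∈ D.N := ((hB.2 hebB).2) T hTH hebT
    have habs : ∀ e', e' ∈ D.N → e' ∈ level H 2 → e' ⊆ T → e' ∈ B := by
      intro e' h1 h2 h3
      by_cases heq : e' = eb
      · rw [heq]; exact hebB
      · have hc2 : eb.card = 2 := (hBsub hebB).2.2
        have hc2' : e'.card = 2 := h2.2
        have hle : 3 ≤ (e' ∪ eb).card := by
          by_contra hlt
          push_neg at hlt
          have he1 : e' = e' ∪ eb :=
            Finset.eq_of_subset_of_card_le Finset.subset_union_left (by omega)
          have he2 : eb = e' ∪ eb :=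
            Finset.eq_of_subset_of_card_le Finset.subset_union_right (by omega)
          exact heq (he1.trans he2.symm)
        have hEq : e' ∪ eb = T :=
          Finset.eq_of_subset_of_card_le (Finset.union_subset h3 hebT)
            (by rw [hT.2]; exact hle)
        have hadj : e' ∪ eb ∈ level H 3 := by rw [hEq]; exact hT
        exact absorb hB.1 h1 h2 hebB hadj
    have hb12 : (({i₁, i₂} : Finset I) ∈ B) ↔ ¬ (i₁ ∈ D.plus T ↔ i₂ ∈ D.plus T) := by
      constructor
      · intro h; exact (edge_mem_N D hTN h1T h2T).mp ((hBsub h).1)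
      · intro h; exact habs _ ((edge_mem_N D hTN h1T h2T).mpr h) h12 hs12
    have hb13 : (({i₁, i₃} : Finset I) ∈ B) ↔ ¬ (i₁ ∈ D.plus T ↔ i₃ ∈ D.plus T) := by
      constructor
      · intro h; exact (edge_mem_N D hTN h1T h3T).mp ((hBsub h).1)
      · intro h; exact habs _ ((edge_mem_N D hTN h1T h3T).mpr h) h13 hs13
    have hb32 : (({i₃, i₂} : Finset I) ∈ B) ↔ ¬ (i₃ ∈ D.plus T ↔ i₂ ∈ D.plus T) := by
      constructor
      · intro h; exact (edge_mem_N D hTN h3T h2T).mp ((hBsub h).1)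
      · intro h; exact habs _ ((edge_mem_N D hTN h3T h2T).mpr h) h32 hs32
    simp only [hb12, hb13, hb32]
    by_cases p1 : i₁ ∈ D.plus T <;> by_cases p2 : i₂ ∈ D.plus T <;>
      by_cases p3 : i₃ ∈ D.plus T <;> simp [p1, p2, p3]
  · push_neg at hany
    simp [hany.1, hany.2.1, hany.2.2]

open Classical in
lemma kappa_mid (B : Set (Finset I)) (δ ε ρ : List (Finset I)) (hε : ε ≠ []) :
    kappa B (δ ++ ε ++ ρ) = kappa B δ +
      bcnt B (List.zipWith (· ∪ ·) δ.getLast?.toList ε.head?.toList) + kappa B ε +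
      bcnt B (List.zipWith (· ∪ ·) ε.getLast?.toList ρ.head?.toList) + kappa B ρ := by
  have hhd : (ε ++ ρ).head? = ε.head? := by
    cases ε with
    | nil => exact absurd rfl hε
    | cons a l => rfl
  rw [List.append_assoc, kappa_append B δ (ε ++ ρ), kappa_append B ε ρ, hhd]
  omega

open Classical in
lemma kappa_core {H : Set (Finset I)} {D : NodalDatum H} {B : Set (Finset I)}
    (hB : IsSepBlock D B) {δ ε₁ ε₂ ρ : List (Finset I)} (hcore : ElemPairCore H ε₁ ε₂)
    (h1 : IsKPath H 1 (δ ++ ε₁ ++ ρ)) :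
    kappa B (δ ++ ε₁ ++ ρ) % 2 = kappa B (δ ++ ε₂ ++ ρ) % 2 := by
  rcases hcore with rfl | ⟨a, b, rfl, rfl⟩ | ⟨a, b, c, rfl, rfl, hpath⟩
  · rfl
  · rw [kappa_mid B δ _ ρ (by simp), kappa_mid B δ _ ρ (by simp)]
    simp only [List.head?_cons, List.getLast?_cons_cons, List.getLast?_singleton]
    have k1 : kappa B [{a}, {b}, {a}] =
        (if ({a, b} : Finset I) ∈ B then 1 else 0) +
        (if ({a, b} : Finset I) ∈ B then 1 else 0) := by
      show bcnt B [({a, b} : Finset I), ({b, a} : Finset I)] = _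
      rw [Finset.pair_comm b a, bcnt_cons, bcnt_cons, bcnt_nil]
      omega
    have k2 : kappa B [({a} : Finset I)] = 0 := rfl
    omega
  · rw [kappa_mid B δ _ ρ (by simp), kappa_mid B δ _ ρ (by simp)]
    simp only [List.head?_cons, List.getLast?_cons_cons, List.getLast?_singleton]
    have h12 : ({a, b} : Finset I) ∈ level H 2 := by
      have hch := h1.2.2
      rw [show δ ++ [{a}, {b}] ++ ρ = δ ++ (({a} : Finset I) :: {b} :: ρ) by simp] at hch
      exact chain'_middle δ hch
    have h13 : ({a, c} : Finset I) ∈ level H 2 := hpath.2.1 _ (by simp)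
    have h32 : ({c, b} : Finset I) ∈ level H 2 := hpath.2.1 _ (by simp)
    have hTl : (({a, c} ∪ {c, b}) : Finset I) ∈ level H 3 :=
      (List.isChain_cons_cons.mp hpath.2.2).1
    have hkey := triangle_parity hB a b c h12 h13 h32 hTl
    have k1 : kappa B [{a}, {b}] = (if ({a, b} : Finset I) ∈ B then 1 else 0) := by
      show bcnt B [({a, b} : Finset I)] = _
      rw [bcnt_cons, bcnt_nil]
      omega
    have k2 : kappa B [{a}, {c}, {b}] =
        (if ({a, c} : Finset I) ∈ B then 1 else 0) +
        (if ({c, b} : Finset I) ∈ B then 1 else 0) := by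
      show bcnt B [({a, c} : Finset I), ({c, b} : Finset I)] = _
      rw [bcnt_cons, bcnt_cons, bcnt_nil]
      omega
    omega

lemma kappa_step {H : Set (Finset I)} {D : NodalDatum H} {B : Set (Finset I)}
    (hB : IsSepBlock D B) {γ₁ γ₂ : List (Finset I)}
    (h1 : IsKPath H 1 γ₁) (h2 : IsKPath H 1 γ₂) (hE : ElemHomotopy H γ₁ γ₂) :
    kappa B γ₁ % 2 = kappa B γ₂ % 2 := by
  obtain ⟨δ, ε₁, ε₂, ρ, hpair, h1eq, h2eq⟩ := hE
  subst h1eq; subst h2eq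
  rcases hpair with h | h
  · exact kappa_core hB h h1
  · exact (kappa_core hB h h2).symm

lemma kappa_parity_unique {H : Set (Finset I)} {D : NodalDatum H} {B : Set (Finset I)}
    (hsc : SimplyConnected H) (hB : IsSepBlock D B) {γ γ' : List (Finset I)}
    (h : IsKPath H 1 γ) (h' : IsKPath H 1 γ')
    (hhd : γ.head? = γ'.head?) (hlt : γ.getLast? = γ'.getLast?) :
    kappa B γ % 2 = kappa B γ' % 2 := by
  obtain ⟨⟨hp, -⟩, hchain⟩ := hsc.2 γ γ' h h' h.2.1 h'.2.1 hhd hlt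
  clear hhd hlt h' hp
  have key : IsKPath H 1 γ' ∧ kappa B γ % 2 = kappa B γ' % 2 := by
    induction hchain with
    | refl => exact ⟨h, rfl⟩
    | tail hab hbc ih => exact ⟨hbc.2.1, ih.2.trans (kappa_step hB ih.1 hbc.2.1 hbc.1)⟩
  exact key.2

lemma same_side_edge {H : Set (Finset I)} (D : NodalDatum H) {T : Finset I}
    (hTN : T ∈ D.N) {v v' : I} (hvT : v ∈ T) (hv'T : v' ∈ T)
    (hside : (v ∈ D.plus T ∧ v' ∈ D.plus T) ∨ (v ∈ D.minus T ∧ v' ∈ D.minus T)) :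
    ({v, v'} : Finset I) ∉ D.N := by
  rw [edge_mem_N D hTN hvT hv'T]
  intro hn
  apply hn
  have hD := D.disj T hTN
  rcases hside with ⟨h1, h2⟩ | ⟨h1, h2⟩
  · exact iff_of_true h1 h2
  · exact iff_of_false (fun hp => Finset.disjoint_left.mp hD hp h1)
      (fun hp => Finset.disjoint_left.mp hD hp h2)

lemma walk_lemma {H : Set (Finset I)} (hH : IsCSS H) {D : NodalDatum H}
    {B : Set (Finset I)} (hB : IsSepBlock D B) :
    ∀ ω : List (Finset I), IsKPath H 2 ω → (∀ K ∈ ω, K ∈ B) →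
      ∀ K₀ Ku : Finset I, ω.head? = some K₀ → ω.getLast? = some Ku → ∀ v ∈ K₀,
      ∃ w ∈ Ku, ∃ β : List (Finset I), IsKPath H 1 β ∧ Joins β {v} {w} ∧
        ∀ J ∈ subSup β, J ∉ D.N := by
  intro ω
  induction ω with
  | nil => intro h; exact absurd rfl h.1
  | cons K ω' ih =>
    intro hpath hsupp K₀ Ku hhd hlt v hv
    obtain rfl : K = K₀ := by simpa using hhd
    cases ω' with
    | nil =>
      obtain rfl : K = Ku := by simpa using hlt
      refine ⟨v, hv, [{v}], ⟨by simp, ?_, List.isChain_singleton _⟩, ⟨rfl, rfl⟩, by simp [subSup]⟩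
      intro J hJ
      obtain rfl : J = {v} := by simpa using hJ
      exact ⟨hH.2 v, Finset.card_singleton v⟩
    | cons K' ω'' =>
      have hKB : K ∈ B := hsupp K (by simp)
      have hK'B : K' ∈ B := hsupp K' (by simp)
      have hT : K ∪ K' ∈ level H 3 := (List.isChain_cons_cons.mp hpath.2.2).1
      have hTH : K ∪ K' ∈ H := hT.1
      have hTN : K ∪ K' ∈ D.N := (hB.2 hKB).2 _ hTH Finset.subset_union_left
      have hK'N : K' ∈ D.N := (hB.1.2.1 hK'B).1
      obtain ⟨⟨p, hp⟩, ⟨m, hm⟩⟩ :=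
        (D.mem_iff _ hTN K' Finset.subset_union_right).mp hK'N
      rw [Finset.mem_inter] at hp hm
      have hvT : v ∈ K ∪ K' := Finset.mem_union_left _ hv
      have hvpm : v ∈ D.plus (K ∪ K') ∪ D.minus (K ∪ K') := by
        rw [D.union_eq _ hTN]; exact hvT
      obtain ⟨v', hv'K', hside⟩ :
          ∃ v', v' ∈ K' ∧ ((v ∈ D.plus (K ∪ K') ∧ v' ∈ D.plus (K ∪ K')) ∨
            (v ∈ D.minus (K ∪ K') ∧ v' ∈ D.minus (K ∪ K'))) := by
        rcases Finset.mem_union.mp hvpm with h | h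
        · exact ⟨p, hp.1, Or.inl ⟨h, hp.2⟩⟩
        · exact ⟨m, hm.1, Or.inr ⟨h, hm.2⟩⟩
      have htail : IsKPath H 2 (K' :: ω'') :=
        ⟨by simp, fun J hJ => hpath.2.1 J (List.mem_cons_of_mem _ hJ), hpath.2.2.tail⟩
      rw [List.getLast?_cons_cons] at hlt
      obtain ⟨w, hw, β, hβ, hβj, hβN⟩ :=
        ih htail (fun J hJ => hsupp J (List.mem_cons_of_mem _ hJ)) K' Ku rfl hlt v' hv'K'
      by_cases hvv : v' = v
      · subst hvv
        exact ⟨w, hw, β, hβ, hβj, hβN⟩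
      · have hvv' : v ≠ v' := fun h => hvv h.symm
        have hedge_mem : ({v, v'} : Finset I) ∈ H := by
          refine hH.1 _ hTH {v, v'} ?_
          intro x hx
          simp only [Finset.mem_insert, Finset.mem_singleton] at hx
          rcases hx with rfl | rfl
          · exact hvT
          · exact Finset.mem_union_right _ hv'K'
        have hedge2 : ({v, v'} : Finset I) ∈ level H 2 := ⟨hedge_mem, Finset.card_pair hvv'⟩
        have hnotN : ({v, v'} : Finset I) ∉ D.N :=
          same_side_edge D hTN hvT (Finset.mem_union_right _ hv'K') hside
        obtain ⟨βt, rfl⟩ : ∃ βt, β = {v'} :: βt := by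
          cases β with
          | nil => exact absurd hβj.1 (by simp)
          | cons b βt => exact ⟨βt, by rw [show b = {v'} by simpa using hβj.1]⟩
        refine ⟨w, hw, {v} :: {v'} :: βt, ⟨by simp, ?_, ?_⟩, ⟨rfl, ?_⟩, ?_⟩
        · intro J hJ
          rcases List.mem_cons.mp hJ with rfl | hJ
          · exact ⟨hH.2 v, Finset.card_singleton v⟩
          · exact hβ.2.1 J hJ
        · refine List.isChain_cons_cons.mpr ⟨?_, hβ.2.2⟩
          show ({v} ∪ {v'} : Finset I) ∈ level H 2
          rwa [show ({v} ∪ {v'} : Finset I) = {v, v'} from rfl]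
        · rw [List.getLast?_cons_cons]; exact hβj.2
        · intro J hJ
          rw [subSup_cons_cons] at hJ
          rcases List.mem_cons.mp hJ with rfl | hJ
          · rwa [show ({v} ∪ {v'} : Finset I) = {v, v'} from rfl]
          · exact hβN J hJ

end AuxLemmas2

/-- Let `B` be a nodal separating block, `i ≠ j` with
`A_B(i) = A_B(j)`, and suppose there is a 2-path in `H` with support in `B` whose first
entry contains `i` and whose last entry contains `j`. Then there is a 1-path `β` joining
`{i}` and `{j}` such that no entry of the subsupport of `β` belongs to `N`; in particular
`κ_B(β) = 0`. -/
theorem connection_avoiding_nodal_strata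
    {I : Type*} [Fintype I] [DecidableEq I] (H : Set (Finset I))
    (hH : IsCSS H) (hsc : SimplyConnected H)
    (D : NodalDatum H) (B : Set (Finset I)) (hB : IsSepBlock D B)
    (i j : I) (hij : i ≠ j) (hAB : ABset H B i = ABset H B j)
    (ω : List (Finset I)) (hω : IsKPath H 2 ω) (hωB : ∀ K ∈ ω, K ∈ B)
    (K₀ Ku : Finset I) (hhead : ω.head? = some K₀) (hiK : i ∈ K₀)
    (hlast : ω.getLast? = some Ku) (hjK : j ∈ Ku) :
    ∃ β : List (Finset I), IsKPath H 1 β ∧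
      Joins β ({i} : Finset I) ({j} : Finset I) ∧
      (∀ J ∈ subSup β, J ∉ D.N) ∧ kappa B β = 0 := by
  classical
  obtain ⟨w, hw, β, hβ, hβj, hβN⟩ :=
    walk_lemma hH hB ω hω hωB K₀ Ku hhead hlast i hiK
  have hκ0 : kappa B β = 0 := by
    rw [kappa_eq]
    exact bcnt_eq_zero fun a ha haB => hβN a ha ((hB.1.2.1 haB).1)
  by_cases hwj : w = j
  · subst hwj
    exact ⟨β, hβ, hβj, hβN, hκ0⟩
  · exfalso
    have hKuB : Ku ∈ B := hωB Ku (mem_of_getLast?_eq hlast)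
    have hKu2 : Ku ∈ level H 2 := (hB.1.2.1 hKuB).2
    have hwj' : ({w, j} : Finset I) = Ku := by
      refine Finset.eq_of_subset_of_card_le ?_ ?_
      · intro x hx
        simp only [Finset.mem_insert, Finset.mem_singleton] at hx
        rcases hx with rfl | rfl
        exacts [hw, hjK]
      · rw [hKu2.2, Finset.card_pair hwj]
    obtain ⟨βt, rfl⟩ : ∃ βt, β = {i} :: βt := by
      cases β with
      | nil => exact absurd hβj.1 (by simp)
      | cons b βt => exact ⟨βt, by rw [show b = ({i} : Finset I) by simpa using hβj.1]⟩
    have hβlast : (({i} : Finset I) :: βt).getLast? = some {w} := hβj.2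
    have hβ₂path : IsKPath H 1 ((({i} : Finset I) :: βt) ++ [{j}]) := by
      refine ⟨by simp, ?_, ?_⟩
      · intro J hJ
        rcases List.mem_append.mp hJ with hJ | hJ
        · exact hβ.2.1 J hJ
        · obtain rfl : J = {j} := by simpa using hJ
          exact ⟨hH.2 j, Finset.card_singleton j⟩
      · refine List.isChain_append.mpr ⟨hβ.2.2, by simp, ?_⟩
        intro x hx y hy
        rw [hβlast] at hx
        obtain rfl : ({w} : Finset I) = x := by simpa using hx
        obtain rfl : ({j} : Finset I) = y := by simpa using hy
        show ({w} ∪ {j} : Finset I) ∈ level H 2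
        rw [show ({w} ∪ {j} : Finset I) = {w, j} from rfl, hwj']
        exact hKu2
    have hβ₂j : Joins ((({i} : Finset I) :: βt) ++ [{j}]) ({i} : Finset I) ({j} : Finset I) :=
      ⟨by simp, by rw [List.getLast?_concat]⟩
    have hκβ₂ : kappa B ((({i} : Finset I) :: βt) ++ [{j}]) % 2 = 1 := by
      rw [kappa_append, hβlast]
      have hpos : ({w} ∪ {j} : Finset I) ∈ B := by
        rw [show ({w} ∪ {j} : Finset I) = {w, j} from rfl, hwj']
        exact hKuB
      have hbj : bcnt B (List.zipWith (· ∪ ·) (some ({w} : Finset I)).toList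
          (([{j}] : List (Finset I)).head?.toList)) = 1 := by
        show bcnt B [({w} ∪ {j} : Finset I)] = 1
        rw [bcnt_cons, bcnt_nil, if_pos hpos]
      have hk2 : kappa B [({j} : Finset I)] = 0 := rfl
      omega
    have hjA : ({j} : Finset I) ∈ ABset H B j := by
      refine ⟨⟨hH.2 j, Finset.card_singleton j⟩, [{j}], ⟨by simp, ?_, List.isChain_singleton _⟩,
        ⟨rfl, rfl⟩, ⟨0, rfl⟩⟩
      intro J hJ
      obtain rfl : J = {j} := by simpa using hJ
      exact ⟨hH.2 j, Finset.card_singleton j⟩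
    rw [← hAB] at hjA
    obtain ⟨-, γ, hγ, hγj, hγeven⟩ := hjA
    have hpar := kappa_parity_unique hsc hB hβ₂path hγ
      (by rw [hβ₂j.1, hγj.1]) (by rw [hβ₂j.2, hγj.2])
    obtain ⟨t, ht⟩ := hγeven
    omega
end

section
/- Let H be a simply connected combinatorial strata structure endowed with a datum (N, {P_J}) of nodal strata, and let B be a nodal separating block of N in H. Then for every i ∈ I and every {j} ∈ A_B(i), there is a 1-path γ in H joining {i} and {j} such that κ_B(γ) = 0. -/
section Aux

open Classical

variable {I : Type*} [DecidableEq I]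

lemma subSup_single (a : Finset I) : subSup [a] = [] := rfl

lemma subSup_cons₂ (x y : Finset I) (l : List (Finset I)) :
    subSup (x :: y :: l) = (x ∪ y) :: subSup (y :: l) := rfl

lemma kappa_nil (B : Set (Finset I)) : kappa B ([] : List (Finset I)) = 0 := rfl

lemma kappa_single (B : Set (Finset I)) (a : Finset I) : kappa B [a] = 0 := rfl

lemma kappa_cons₂ (B : Set (Finset I)) (x y : Finset I) (l : List (Finset I)) :
    kappa B (x :: y :: l) = (if x ∪ y ∈ B then 1 else 0) + kappa B (y :: l) := by
  by_cases h : x ∪ y ∈ B <;>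
    simp [kappa, subSup_cons₂, List.countP_cons, h, Nat.add_comm]

lemma kappa_cons_head (B : Set (Finset I)) (x y : Finset I) {m : List (Finset I)}
    (h : m.head? = some y) :
    kappa B (x :: m) = (if x ∪ y ∈ B then 1 else 0) + kappa B m := by
  obtain ⟨z, l, rfl⟩ : ∃ z l, m = z :: l := by
    cases m with
    | nil => simp at h
    | cons z l => exact ⟨z, l, rfl⟩
  obtain rfl : z = y := by simpa using h
  exact kappa_cons₂ B x z l

lemma subSup_append_s6 (l1 l2 : List (Finset I)) (a : Finset I) :
    subSup (l1 ++ a :: l2) = subSup (l1 ++ [a]) ++ subSup (a :: l2) := by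
  induction l1 with
  | nil => simp [subSup]
  | cons x l1 ih =>
    cases l1 with
    | nil => simp [subSup_cons₂, subSup_single]
    | cons y l1' =>
      have h2 := ih
      simp only [List.cons_append] at h2
      simp only [List.cons_append, subSup_cons₂, h2]

lemma kappa_append_s6 (B : Set (Finset I)) (l1 l2 : List (Finset I)) (a : Finset I) :
    kappa B (l1 ++ a :: l2) = kappa B (l1 ++ [a]) + kappa B (a :: l2) := by
  unfold kappa
  rw [subSup_append_s6, List.countP_append]

lemma kappa_split (B : Set (Finset I)) (δ ρ ε : List (Finset I)) (h a : Finset I)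
    (hh : ε.head? = some h) (ha : ε.getLast? = some a) :
    kappa B (δ ++ ε ++ ρ) = kappa B (δ ++ [h]) + kappa B ε + kappa B (a :: ρ) := by
  obtain ⟨t, rfl⟩ : ∃ t, ε = h :: t := by
    cases ε with
    | nil => simp at hh
    | cons x t => simp only [List.head?_cons, Option.some.injEq] at hh; exact ⟨t, by rw [hh]⟩
  have hne : h :: t ≠ [] := List.cons_ne_nil _ _
  have hlast : (h :: t).getLast hne = a := by
    have h5 := List.getLast?_eq_getLast hne
    rw [h5] at ha; exact Option.some.injEq _ _ |>.mp ha
  have hdl : (h :: t).dropLast ++ [a] = h :: t := by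
    rw [← hlast]; exact List.dropLast_append_getLast hne
  calc kappa B (δ ++ (h :: t) ++ ρ) = kappa B (δ ++ h :: (t ++ ρ)) := by
        rw [List.append_assoc]; rfl
    _ = kappa B (δ ++ [h]) + kappa B (h :: t ++ ρ) := kappa_append_s6 B δ (t ++ ρ) h
    _ = kappa B (δ ++ [h]) + kappa B ((h :: t).dropLast ++ a :: ρ) := by
        conv_lhs => rw [← hdl]
        rw [List.append_assoc]; rfl
    _ = kappa B (δ ++ [h]) + (kappa B ((h :: t).dropLast ++ [a]) + kappa B (a :: ρ)) := by
        rw [kappa_append_s6 B ((h :: t).dropLast) ρ a]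
    _ = kappa B (δ ++ [h]) + kappa B (h :: t) + kappa B (a :: ρ) := by
        rw [hdl]; ring

lemma isKPath_split {H : Set (Finset I)} {k : ℕ} {l1 l2 : List (Finset I)}
    (h : IsKPath H k (l1 ++ l2)) :
    (l1 ≠ [] → IsKPath H k l1) ∧ (l2 ≠ [] → IsKPath H k l2) := by
  obtain ⟨-, hmem, hch⟩ := h
  change List.IsChain _ _ at hch; rw [List.isChain_append] at hch
  exact ⟨fun h1 => ⟨h1, fun J hJ => hmem J (by simp [hJ]), hch.1⟩,
    fun h2 => ⟨h2, fun J hJ => hmem J (by simp [hJ]), hch.2.1⟩⟩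

lemma glue {H : Set (Finset I)} {k : ℕ} (B : Set (Finset I)) {γ₁ γ₂ : List (Finset I)}
    {a : Finset I} (h₁ : IsKPath H k γ₁) (h₂ : IsKPath H k γ₂)
    (hl : γ₁.getLast? = some a) (hh : γ₂.head? = some a) :
    IsKPath H k (γ₁ ++ γ₂.tail) ∧ (γ₁ ++ γ₂.tail).head? = γ₁.head? ∧
      (γ₁ ++ γ₂.tail).getLast? = γ₂.getLast? ∧
      kappa B (γ₁ ++ γ₂.tail) = kappa B γ₁ + kappa B γ₂ ∧
      ∀ J ∈ γ₁ ++ γ₂.tail, J ∈ γ₁ ∨ J ∈ γ₂ := by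
  obtain ⟨t, rfl⟩ : ∃ t, γ₂ = a :: t := by
    cases γ₂ with
    | nil => simp at hh
    | cons x t => simp only [List.head?_cons, Option.some.injEq] at hh; exact ⟨t, by rw [hh]⟩
  obtain ⟨d, rfl⟩ : ∃ d, γ₁ = d ++ [a] := by
    have hne : γ₁ ≠ [] := h₁.1
    have hlast : γ₁.getLast hne = a := by
      have h5 := List.getLast?_eq_getLast hne
      rw [h5] at hl; exact Option.some.injEq _ _ |>.mp hl
    exact ⟨γ₁.dropLast, by rw [← hlast, List.dropLast_append_getLast]⟩
  have hch2 := List.isChain_cons.mp h₂.2.2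
  refine ⟨⟨by simp, ?_, ?_⟩, ?_, ?_, ?_, ?_⟩
  · intro J hJ
    simp only [List.tail_cons, List.mem_append] at hJ
    rcases hJ with hJ | hJ
    · exact h₁.2.1 J (by simpa using hJ)
    · exact h₂.2.1 J (by simp [hJ])
  · change List.IsChain _ _; rw [List.isChain_append]
    refine ⟨h₁.2.2, hch2.2, ?_⟩
    intro x hx y hy
    rw [List.getLast?_concat] at hx
    simp only [Option.mem_def, Option.some.injEq] at hx
    subst hx
    exact hch2.1 y hy
  · simp only [List.tail_cons]
    rw [List.append_assoc]
    cases d <;> simp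
  · simp only [List.tail_cons]
    cases t with
    | nil => simp
    | cons b t' =>
      have h3 : (b :: t').getLast? = some ((b :: t').getLast (by simp)) :=
        List.getLast?_eq_getLast _
      rw [List.getLast?_append, List.getLast?_cons_cons, h3]
      rfl
  · simp only [List.tail_cons]
    rw [List.append_assoc, List.singleton_append, kappa_append_s6]
  · intro J hJ
    simp only [List.tail_cons] at hJ
    rcases List.mem_append.mp hJ with hJ | hJ
    · exact Or.inl hJ
    · exact Or.inr (List.mem_cons_of_mem _ hJ)

end Aux
section Aux2

open Classical

variable {I : Type*} [DecidableEq I] {H : Set (Finset I)}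

lemma isKPath_single {k : ℕ} {a : Finset I} (h : a ∈ level H k) : IsKPath H k [a] :=
  ⟨by simp, by intro J hJ; simp at hJ; subst hJ; exact h, List.isChain_singleton a⟩

lemma isKPath_pair {k : ℕ} {a b : Finset I} (h1 : a ∈ level H k) (h2 : b ∈ level H k)
    (h3 : a ∪ b ∈ level H (k + 1)) : IsKPath H k [a, b] := by
  refine ⟨by simp, ?_, List.isChain_pair.mpr h3⟩
  intro J hJ
  simp at hJ
  rcases hJ with rfl | rfl <;> assumption

lemma mem_block_of_adj {D : NodalDatum H} {B : Set (Finset I)} (hB : IsSepBlock D B)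
    {e e' : Finset I} (he : e ∈ B) (he'N : e' ∈ D.N) (he'2 : e' ∈ level H 2)
    (hun : e ∪ e' ∈ level H 3) : e' ∈ B := by
  obtain ⟨⟨hne, hsub, hconn, hmax⟩, hstar⟩ := hB
  have he2 : e ∈ level H 2 := (hsub he).2
  have hpair1 : IsKPath H 2 [e, e'] := isKPath_pair he2 he'2 hun
  have hpair2 : IsKPath H 2 [e', e] := isKPath_pair he'2 he2 (by rwa [Finset.union_comm])
  have hconn' : KConnectedIn H 2 (insert e' B) := by
    have to_e : ∀ K ∈ insert e' B, ∃ p, IsKPath H 2 p ∧ Joins p K e ∧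
        ∀ L ∈ p, L ∈ insert e' B := by
      intro K hK
      rcases Set.mem_insert_iff.mp hK with h | h
      · refine ⟨[e', e], hpair2, ⟨by simp [h], by simp⟩, ?_⟩
        intro L hL
        simp at hL
        rcases hL with rfl | rfl
        · exact Set.mem_insert _ _
        · exact Set.mem_insert_iff.mpr (Or.inr he)
      · obtain ⟨p, hp, hjp, hsp⟩ := hconn K h e he
        exact ⟨p, hp, hjp, fun L hL => Set.mem_insert_iff.mpr (Or.inr (hsp L hL))⟩
    have from_e : ∀ K ∈ insert e' B, ∃ p, IsKPath H 2 p ∧ Joins p e K ∧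
        ∀ L ∈ p, L ∈ insert e' B := by
      intro K hK
      rcases Set.mem_insert_iff.mp hK with h | h
      · refine ⟨[e, e'], hpair1, ⟨by simp, by simp [h]⟩, ?_⟩
        intro L hL
        simp at hL
        rcases hL with rfl | rfl
        · exact Set.mem_insert_iff.mpr (Or.inr he)
        · exact Set.mem_insert _ _
      · obtain ⟨p, hp, hjp, hsp⟩ := hconn e he K h
        exact ⟨p, hp, hjp, fun L hL => Set.mem_insert_iff.mpr (Or.inr (hsp L hL))⟩
    intro J hJ J' hJ'
    obtain ⟨p1, hp1, hjp1, hsp1⟩ := to_e J hJ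
    obtain ⟨p2, hp2, hjp2, hsp2⟩ := from_e J' hJ'
    obtain ⟨hq, hqh, hql, -, hqs⟩ := glue (H := H) (k := 2) B hp1 hp2 hjp1.2 hjp2.1
    refine ⟨p1 ++ p2.tail, hq, ⟨by rw [hqh]; exact hjp1.1, by rw [hql]; exact hjp2.2⟩, ?_⟩
    intro K hK
    rcases hqs K hK with h | h
    · exact hsp1 K h
    · exact hsp2 K h
  have hkey := hmax (insert e' B) (Set.subset_insert _ _)
    (Set.insert_subset_iff.mpr ⟨⟨he'N, he'2⟩, hsub⟩) hconn'
  rw [← hkey]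
  exact Set.mem_insert _ _

lemma edge_mem_B_iff (hH : IsCSS H) {D : NodalDatum H} {B : Set (Finset I)}
    (hB : IsSepBlock D B) {T : Finset I} (hT : T ∈ H) (hT3 : T.card = 3)
    {e₀ : Finset I} (he₀ : e₀ ∈ B) (he₀T : e₀ ⊆ T) {u v : I}
    (hu : u ∈ T) (hv : v ∈ T) (huv : u ≠ v) :
    ({u, v} : Finset I) ∈ B ↔ ¬ (u ∈ D.plus T ↔ v ∈ D.plus T) := by
  have hTN : T ∈ D.N := (hB.2 he₀).2 T hT he₀T
  have hsubB := hB.1.2.1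
  have hside : ∀ w ∈ T, (w ∈ D.plus T ∨ w ∈ D.minus T) ∧
      ¬(w ∈ D.plus T ∧ w ∈ D.minus T) := by
    intro w hw
    constructor
    · have h5 := D.union_eq T hTN
      rw [← h5] at hw
      exact Finset.mem_union.mp hw
    · rintro ⟨h1, h2⟩
      exact Finset.disjoint_left.mp (D.disj T hTN) h1 h2
  have huvT : ({u, v} : Finset I) ⊆ T := by
    intro x hx; simp at hx; rcases hx with rfl | rfl <;> assumption
  constructor
  · intro hmem hiff
    have hN : ({u, v} : Finset I) ∈ D.N := (hsubB hmem).1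
    have h2 := (D.mem_iff T hTN _ huvT).mp hN
    by_cases hu1 : u ∈ D.plus T
    · have hv1 : v ∈ D.plus T := hiff.mp hu1
      obtain ⟨x, hx⟩ := h2.2
      rw [Finset.mem_inter] at hx
      have hx1 := hx.1
      simp at hx1
      rcases hx1 with rfl | rfl
      · exact (hside x hu).2 ⟨hu1, hx.2⟩
      · exact (hside x hv).2 ⟨hv1, hx.2⟩
    · have hv1 : v ∉ D.plus T := fun h => hu1 (hiff.mpr h)
      obtain ⟨x, hx⟩ := h2.1
      rw [Finset.mem_inter] at hx
      have hx1 := hx.1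
      simp at hx1
      rcases hx1 with rfl | rfl
      · exact hu1 hx.2
      · exact hv1 hx.2
  · intro hne
    have hedge : ∃ p q : I, ({p, q} : Finset I) = {u, v} ∧ p ∈ D.plus T ∧ q ∈ D.minus T ∧
        p ∈ T ∧ q ∈ T := by
      by_cases hu1 : u ∈ D.plus T
      · have hv1 : v ∉ D.plus T := fun h => hne ⟨fun _ => h, fun _ => hu1⟩
        have hv2 : v ∈ D.minus T := (hside v hv).1.resolve_left hv1
        exact ⟨u, v, rfl, hu1, hv2, hu, hv⟩
      · have hv1 : v ∈ D.plus T := by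
          by_contra hv1
          exact hne ⟨fun h => absurd h hu1, fun h => absurd h hv1⟩
        have hu2 : u ∈ D.minus T := (hside u hu).1.resolve_left hu1
        exact ⟨v, u, by rw [Finset.pair_comm], hv1, hu2, hv, hu⟩
    obtain ⟨p, q, hpq, hpP, hqM, hpT, hqT⟩ := hedge
    rw [← hpq]
    have hpqne : p ≠ q := fun h => (hside p hpT).2 ⟨hpP, h ▸ hqM⟩
    have hsubT : ({p, q} : Finset I) ⊆ T := by
      intro x hx; simp at hx; rcases hx with rfl | rfl <;> assumption
    have hN : ({p, q} : Finset I) ∈ D.N := by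
      rw [D.mem_iff T hTN _ hsubT]
      exact ⟨⟨p, Finset.mem_inter.mpr ⟨by simp, hpP⟩⟩,
        ⟨q, Finset.mem_inter.mpr ⟨by simp, hqM⟩⟩⟩
    have hlvl : ({p, q} : Finset I) ∈ level H 2 :=
      ⟨hH.1 T hT _ hsubT, Finset.card_pair hpqne⟩
    by_cases heq : e₀ = ({p, q} : Finset I)
    · exact heq ▸ he₀
    · have hcard0 : e₀.card = 2 := (hsubB he₀).2.2
      have hcardpq : ({p, q} : Finset I).card = 2 := Finset.card_pair hpqne
      have huni : e₀ ∪ {p, q} = T := by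
        apply Finset.eq_of_subset_of_card_le (Finset.union_subset he₀T hsubT)
        rw [hT3]
        by_contra hlt
        push_neg at hlt
        have h1 : e₀ = e₀ ∪ {p, q} := Finset.eq_of_subset_of_card_le
          (Finset.subset_union_left : e₀ ⊆ e₀ ∪ {p, q}) (by omega)
        have h2 : ({p, q} : Finset I) = e₀ ∪ {p, q} := Finset.eq_of_subset_of_card_le
          (Finset.subset_union_right : ({p, q} : Finset I) ⊆ e₀ ∪ {p, q}) (by omega)
        exact heq (h1.trans h2.symm)
      exact mem_block_of_adj ⟨hB.1, hB.2⟩ he₀ hN hlvl (by rw [huni]; exact ⟨hT, hT3⟩)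

lemma tri_even (hH : IsCSS H) {D : NodalDatum H} {B : Set (Finset I)}
    (hB : IsSepBlock D B) {i₁ i₂ i₃ : I}
    (hp : IsKPath H 2 [{i₁, i₃}, {i₃, i₂}]) :
    Even ((if ({i₁, i₂} : Finset I) ∈ B then 1 else 0) +
      (if ({i₁, i₃} : Finset I) ∈ B then 1 else 0) +
      (if ({i₃, i₂} : Finset I) ∈ B then 1 else 0)) := by
  have h13l : ({i₁, i₃} : Finset I) ∈ level H 2 := hp.2.1 _ (by simp)
  have h32l : ({i₃, i₂} : Finset I) ∈ level H 2 := hp.2.1 _ (by simp)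
  have hun : ({i₁, i₃} ∪ {i₃, i₂} : Finset I) ∈ level H 3 := by
    have hch := hp.2.2
    change List.IsChain _ _ at hch; rw [List.isChain_pair] at hch
    exact hch
  have hTeq : ({i₁, i₃} ∪ {i₃, i₂} : Finset I) = {i₁, i₂, i₃} := by
    ext x; simp; tauto
  rw [hTeq] at hun
  have hTH : ({i₁, i₂, i₃} : Finset I) ∈ H := hun.1
  have hT3 : ({i₁, i₂, i₃} : Finset I).card = 3 := hun.2
  have h13 : i₁ ≠ i₃ := by
    rintro rfl
    have h5 := h13l.2
    simp at h5
  have h32 : i₃ ≠ i₂ := by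
    rintro rfl
    have h5 := h32l.2
    simp at h5
  have h12 : i₁ ≠ i₂ := by
    rintro rfl
    have h5 : ({i₁, i₁, i₃} : Finset I) = {i₁, i₃} := by ext x; simp
    rw [h5] at hT3
    have h6 := Finset.card_insert_le i₁ ({i₃} : Finset I)
    simp at h6
    omega
  have hm1 : i₁ ∈ ({i₁, i₂, i₃} : Finset I) := by simp
  have hm2 : i₂ ∈ ({i₁, i₂, i₃} : Finset I) := by simp
  have hm3 : i₃ ∈ ({i₁, i₂, i₃} : Finset I) := by simp
  by_cases hc : ({i₁, i₂} : Finset I) ∈ B ∨ ({i₁, i₃} : Finset I) ∈ B ∨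
      ({i₃, i₂} : Finset I) ∈ B
  · obtain ⟨e₀, he₀, he₀T⟩ : ∃ e₀ ∈ B, e₀ ⊆ ({i₁, i₂, i₃} : Finset I) := by
      rcases hc with h | h | h
      · exact ⟨_, h, by intro x hx; simp at hx ⊢; tauto⟩
      · exact ⟨_, h, by intro x hx; simp at hx ⊢; tauto⟩
      · exact ⟨_, h, by intro x hx; simp at hx ⊢; tauto⟩
    rw [edge_mem_B_iff hH hB hTH hT3 he₀ he₀T hm1 hm2 h12,
      edge_mem_B_iff hH hB hTH hT3 he₀ he₀T hm1 hm3 h13,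
      edge_mem_B_iff hH hB hTH hT3 he₀ he₀T hm3 hm2 h32]
    by_cases p1 : i₁ ∈ D.plus ({i₁, i₂, i₃} : Finset I) <;>
      by_cases p2 : i₂ ∈ D.plus ({i₁, i₂, i₃} : Finset I) <;>
      by_cases p3 : i₃ ∈ D.plus ({i₁, i₂, i₃} : Finset I) <;>
      simp [p1, p2, p3]
  · push_neg at hc
    simp [hc.1, hc.2.1, hc.2.2]

end Aux2
section Aux3

open Classical

variable {I : Type*} [DecidableEq I] {H : Set (Finset I)}

lemma getLast?_append_ne {α : Type*} (l1 l2 : List α) (h : l2 ≠ []) :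
    (l1 ++ l2).getLast? = l2.getLast? := by
  rw [List.getLast?_append]
  obtain ⟨x, hx⟩ : ∃ x, l2.getLast? = some x := ⟨l2.getLast h, List.getLast?_eq_getLast h⟩
  rw [hx]
  rfl

lemma elemHomotopy_parity (hH : IsCSS H) {D : NodalDatum H} {B : Set (Finset I)}
    (hB : IsSepBlock D B) {γ₁ γ₂ : List (Finset I)} (h : ElemHomotopy H γ₁ γ₂) :
    Even (kappa B γ₁ + kappa B γ₂) := by
  obtain ⟨δ, ε₁, ε₂, ρ, hpair, rfl, rfl⟩ := h
  suffices hs : ∀ ε ε' : List (Finset I), ElemPairCore H ε ε' →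
      Even (kappa B (δ ++ ε ++ ρ) + kappa B (δ ++ ε' ++ ρ)) by
    rcases hpair with h | h
    · exact hs _ _ h
    · have h5 := hs _ _ h
      rwa [Nat.add_comm] at h5
  intro ε ε' hcore
  rcases hcore with rfl | ⟨i₁, i₂, rfl, rfl⟩ | ⟨i₁, i₂, i₃, rfl, rfl, hkp⟩
  · exact ⟨_, rfl⟩
  · rw [kappa_split B δ ρ _ {i₁} {i₁} (by simp) (by simp),
      kappa_split B δ ρ _ {i₁} {i₁} (by simp) (by simp)]
    rw [kappa_cons₂, kappa_cons₂, kappa_single,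
      Finset.union_comm ({i₂} : Finset I) {i₁}]
    generalize (if ({i₁} ∪ {i₂} : Finset I) ∈ B then 1 else 0) = t
    generalize kappa B (δ ++ [({i₁} : Finset I)]) = a
    generalize kappa B (({i₁} : Finset I) :: ρ) = b
    rw [Nat.even_iff]
    omega
  · have htri := tri_even hH hB hkp
    rw [kappa_split B δ ρ _ {i₁} {i₂} (by simp) (by simp),
      kappa_split B δ ρ _ {i₁} {i₂} (by simp) (by simp)]
    rw [kappa_cons₂, kappa_cons₂, kappa_cons₂, kappa_single]
    simp only [← Finset.insert_eq] at htri ⊢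
    set t1 := (if ({i₁, i₂} : Finset I) ∈ B then 1 else 0) with ht1
    set t2 := (if ({i₁, i₃} : Finset I) ∈ B then 1 else 0) with ht2
    set t3 := (if ({i₃, i₂} : Finset I) ∈ B then 1 else 0) with ht3
    generalize kappa B (δ ++ [({i₁} : Finset I)]) = a
    generalize kappa B (({i₂} : Finset I) :: ρ) = b
    rw [Nat.even_iff] at htri ⊢
    rw [ht1, ht2, ht3] at htri
    by_cases c1 : ({i₁, i₂} : Finset I) ∈ B <;> by_cases c2 : ({i₁, i₃} : Finset I) ∈ B <;>
      by_cases c3 : ({i₃, i₂} : Finset I) ∈ B <;> simp [c1, c2, c3] at htri ⊢ <;> omega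

lemma homotopicIn_parity (hH : IsCSS H) {D : NodalDatum H} {B A : Set (Finset I)}
    (hB : IsSepBlock D B) {γ γ' : List (Finset I)} (h : HomotopicIn H A γ γ') :
    Even (kappa B γ + kappa B γ') := by
  obtain ⟨-, hrel⟩ := h
  induction hrel with
  | refl => exact ⟨_, rfl⟩
  | tail hab hstep ih =>
    have h2 := elemHomotopy_parity hH hB (B := B) hstep.1
    rw [Nat.even_iff] at *
    omega

lemma joins_parity (hH : IsCSS H) (hsc : SimplyConnected H) {D : NodalDatum H}
    {B : Set (Finset I)} (hB : IsSepBlock D B) {γ γ' : List (Finset I)} {X Y : Finset I}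
    (hγ : IsKPath H 1 γ) (hγ' : IsKPath H 1 γ') (hj : Joins γ X Y) (hj' : Joins γ' X Y) :
    Even (kappa B γ + kappa B γ') := by
  have hh := hsc.2 γ γ' hγ hγ' hγ.2.1 hγ'.2.1 (hj.1.trans hj'.1.symm) (hj.2.trans hj'.2.symm)
  exact homotopicIn_parity hH hB hh

lemma side_travel (hH : IsCSS H) {D : NodalDatum H} {B : Set (Finset I)}
    (hB : IsSepBlock D B) :
    ∀ es : List (Finset I), IsKPath H 2 es → (∀ e ∈ es, e ∈ B) →
    ∀ e₀, es.head? = some e₀ → ∀ a ∈ e₀, ∀ em, es.getLast? = some em →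
    ∃ c ∈ em, ∃ π : List (Finset I), IsKPath H 1 π ∧ Joins π {a} {c} ∧ kappa B π = 0 := by
  intro es
  induction es with
  | nil => intro h; exact absurd rfl h.1
  | cons e rest ih =>
    intro hpath hsup e₀ hh a ha em hl
    obtain rfl : e = e₀ := by simpa using hh
    cases rest with
    | nil =>
      obtain rfl : e = em := by simpa using hl
      exact ⟨a, ha, [{a}], isKPath_single ⟨hH.2 a, Finset.card_singleton a⟩,
        ⟨rfl, by simp⟩, kappa_single B _⟩
    | cons e₁ rest' =>
      have hch := hpath.2.2
      change List.IsChain _ _ at hch; rw [List.isChain_cons_cons] at hch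
      have hT : e ∪ e₁ ∈ level H 3 := hch.1
      have htail : IsKPath H 2 (e₁ :: rest') :=
        ⟨by simp, fun J hJ => hpath.2.1 J (List.mem_cons_of_mem _ hJ), hch.2⟩
      have hTH : e ∪ e₁ ∈ H := hT.1
      have heB : e ∈ B := hsup _ (by simp)
      have he₁B : e₁ ∈ B := hsup _ (by simp)
      have hTN : e ∪ e₁ ∈ D.N := (hB.2 heB).2 _ hTH Finset.subset_union_left
      have he₁N : e₁ ∈ D.N := (hB.1.2.1 he₁B).1
      have hmem := (D.mem_iff _ hTN e₁ Finset.subset_union_right).mp he₁N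
      have haT : a ∈ e ∪ e₁ := Finset.mem_union_left _ ha
      have hclaim : ∃ d ∈ e₁, d = a ∨ ({a, d} : Finset I) ∉ D.N := by
        by_cases hq : a ∈ D.plus (e ∪ e₁)
        · obtain ⟨p, hp⟩ := hmem.1
          rw [Finset.mem_inter] at hp
          refine ⟨p, hp.1, ?_⟩
          by_cases hpa : p = a
          · exact Or.inl hpa
          · refine Or.inr fun hN => ?_
            have hsub : ({a, p} : Finset I) ⊆ e ∪ e₁ := by
              intro x hx; simp at hx
              rcases hx with rfl | rfl
              · exact haT
              · exact Finset.mem_union_right _ hp.1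
            obtain ⟨x, hx⟩ := ((D.mem_iff _ hTN {a, p} hsub).mp hN).2
            rw [Finset.mem_inter] at hx
            have hx1 := hx.1
            simp at hx1
            rcases hx1 with rfl | rfl
            · exact Finset.disjoint_left.mp (D.disj _ hTN) hq hx.2
            · exact Finset.disjoint_left.mp (D.disj _ hTN) hp.2 hx.2
        · have haM : a ∈ D.minus (e ∪ e₁) := by
            have h5 := D.union_eq _ hTN
            rw [← h5] at haT
            exact (Finset.mem_union.mp haT).resolve_left hq
          obtain ⟨m, hm⟩ := hmem.2
          rw [Finset.mem_inter] at hm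
          refine ⟨m, hm.1, ?_⟩
          by_cases hma : m = a
          · exact Or.inl hma
          · refine Or.inr fun hN => ?_
            have hsub : ({a, m} : Finset I) ⊆ e ∪ e₁ := by
              intro x hx; simp at hx
              rcases hx with rfl | rfl
              · exact Finset.mem_union_left _ ha
              · exact Finset.mem_union_right _ hm.1
            obtain ⟨x, hx⟩ := ((D.mem_iff _ hTN {a, m} hsub).mp hN).1
            rw [Finset.mem_inter] at hx
            have hx1 := hx.1
            simp at hx1
            rcases hx1 with rfl | rfl
            · exact hq hx.2
            · exact Finset.disjoint_left.mp (D.disj _ hTN) hx.2 hm.2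
      obtain ⟨d, hd, hcase⟩ := hclaim
      have hl' : (e₁ :: rest').getLast? = some em := by
        rw [← hl]
        exact List.getLast?_cons_cons.symm
      obtain ⟨c, hc, π, hπ, hjπ, hκπ⟩ :=
        ih htail (fun e' he' => hsup e' (List.mem_cons_of_mem _ he')) e₁ rfl d hd em hl'
      by_cases hda : d = a
      · exact ⟨c, hc, π, hπ, by rwa [hda] at hjπ, hκπ⟩
      · have hnotN : ({a, d} : Finset I) ∉ D.N := hcase.resolve_left hda
        have hadH : ({a, d} : Finset I) ∈ H := by
          refine hH.1 _ hTH _ ?_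
          intro x hx; simp at hx
          rcases hx with rfl | rfl
          · exact haT
          · exact Finset.mem_union_right _ hd
        have hadl : ({a, d} : Finset I) ∈ level H 2 :=
          ⟨hadH, Finset.card_pair (fun h5 => hda h5.symm)⟩
        have hsing : ({a} ∪ {d} : Finset I) = {a, d} := (Finset.insert_eq a {d}).symm
        obtain ⟨πt, rfl⟩ : ∃ πt, π = {d} :: πt := by
          cases π with
          | nil => exact absurd rfl hπ.1
          | cons z πt =>
            have h5 : z = ({d} : Finset I) := by simpa using hjπ.1
            exact ⟨πt, by rw [h5]⟩
        refine ⟨c, hc, {a} :: {d} :: πt, ?_, ?_, ?_⟩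
        · refine ⟨by simp, ?_, ?_⟩
          · intro J hJ
            rcases List.mem_cons.mp hJ with rfl | hJ
            · exact ⟨hH.2 a, Finset.card_singleton a⟩
            · exact hπ.2.1 J hJ
          · change List.IsChain _ _; rw [List.isChain_cons_cons]
            exact ⟨by rw [hsing]; exact hadl, hπ.2.2⟩
        · exact ⟨rfl, by rw [List.getLast?_cons_cons]; exact hjπ.2⟩
        · rw [kappa_cons₂]
          have hnB : ({a} ∪ {d} : Finset I) ∉ B := by
            rw [hsing]
            exact fun hb => hnotN (hB.1.2.1 hb).1
          rw [if_neg hnB, hκπ]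

lemma surg (B : Set (Finset I)) :
    ∀ γ : List (Finset I), kappa B γ ≠ 0 → ∃ δ u v ρ, γ = δ ++ u :: v :: ρ ∧
      u ∪ v ∈ B ∧ kappa B (δ ++ [u]) = 0 ∧ kappa B γ = kappa B (v :: ρ) + 1 := by
  intro γ
  induction γ with
  | nil => intro h; exact absurd (kappa_nil B) h
  | cons x m ih =>
    intro h
    cases m with
    | nil => exact absurd (kappa_single B x) h
    | cons y l =>
      by_cases hxy : x ∪ y ∈ B
      · refine ⟨[], x, y, l, rfl, hxy, kappa_single B x, ?_⟩
        rw [kappa_cons₂, if_pos hxy]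
        ring
      · have h2 : kappa B (y :: l) ≠ 0 := by
          rw [kappa_cons₂, if_neg hxy] at h
          simpa using h
        obtain ⟨δ, u, v, ρ, heq, hB', hκδ, hκ⟩ := ih h2
        refine ⟨x :: δ, u, v, ρ, by simp only [List.cons_append]; rw [heq], hB', ?_, ?_⟩
        · have hhead : (δ ++ [u]).head? = some y := by
            have h5 : (δ ++ u :: v :: ρ).head? = some y := by rw [← heq]; rfl
            rw [← h5]
            cases δ <;> simp
          rw [show ((x :: δ) ++ [u]) = x :: (δ ++ [u]) from rfl,
            kappa_cons_head B x y hhead, if_neg hxy, hκδ]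
        · rw [kappa_cons₂, if_neg hxy, hκ]
          exact Nat.zero_add _

end Aux3
section Aux4

open Classical

variable {I : Type*} [DecidableEq I] {H : Set (Finset I)}

lemma reduce_crossings (hH : IsCSS H) {D : NodalDatum H} {B : Set (Finset I)}
    (hB : IsSepBlock D B) {γ : List (Finset I)} {X Y : Finset I}
    (hγ : IsKPath H 1 γ) (hjγ : Joins γ X Y) (h2 : 2 ≤ kappa B γ) :
    ∃ γ', IsKPath H 1 γ' ∧ Joins γ' X Y ∧ kappa B γ' < kappa B γ := by
  obtain ⟨δ, u, v, ρ, heq, hE, hκδ, hκ1⟩ := surg B γ (by omega)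
  subst heq
  have hγ2 : IsKPath H 1 ((δ ++ [u]) ++ v :: ρ) := by rw [List.append_assoc]; exact hγ
  have hp1 : IsKPath H 1 (δ ++ [u]) := (isKPath_split hγ2).1 (by simp)
  have hp2 : IsKPath H 1 (v :: ρ) := (isKPath_split hγ2).2 (by simp)
  have hκ2ne : kappa B (v :: ρ) ≠ 0 := by omega
  obtain ⟨δ₂, u₂, v₂, ρ₂, heq₂, hF, hκδ₂, hκ2⟩ := surg B (v :: ρ) hκ2ne
  rw [heq₂] at hp2
  have hp2' : IsKPath H 1 ((δ₂ ++ [u₂]) ++ v₂ :: ρ₂) := by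
    rw [List.append_assoc]; exact hp2
  have hq : IsKPath H 1 (u₂ :: v₂ :: ρ₂) := (isKPath_split (l1 := δ₂) hp2).2 (by simp)
  have hqv : IsKPath H 1 (v₂ :: ρ₂) := (isKPath_split hp2').2 (by simp)
  obtain ⟨a, ha⟩ := Finset.card_eq_one.mp (hp1.2.1 u (by simp)).2
  obtain ⟨es, hes, hjes, hses⟩ := hB.1.2.2.1 (u ∪ v) hE (u₂ ∪ v₂) hF
  obtain ⟨c, hc, π, hπ, hjπ, hκπ⟩ := side_travel hH hB es hes hses (u ∪ v) hjes.1 a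
    (by rw [ha]; exact Finset.mem_union_left _ (Finset.mem_singleton_self a)) (u₂ ∪ v₂) hjes.2
  rw [← ha] at hjπ
  obtain ⟨hg1, hg1h, hg1l, hg1κ, -⟩ :=
    glue (H := H) (k := 1) B hp1 hπ List.getLast?_concat hjπ.1
  have hg1κ0 : kappa B ((δ ++ [u]) ++ π.tail) = 0 := by rw [hg1κ, hκδ, hκπ]
  have hheadγ : ((δ ++ [u]) ++ π.tail).head? = some X := by
    rw [hg1h]
    have h5 : (δ ++ [u]).head? = (δ ++ u :: v :: ρ).head? := by cases δ <;> simp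
    rw [h5]; exact hjγ.1
  have hlastγ : (δ ++ u :: v :: ρ).getLast? = (v₂ :: ρ₂).getLast? := by
    rw [show δ ++ u :: v :: ρ = (δ ++ [u]) ++ v :: ρ by simp,
      getLast?_append_ne _ _ (by simp), heq₂,
      show δ₂ ++ u₂ :: v₂ :: ρ₂ = (δ₂ ++ [u₂]) ++ v₂ :: ρ₂ by simp,
      getLast?_append_ne _ _ (by simp)]
  rcases Finset.mem_union.mp hc with hcu | hcv
  · have hu₂c : u₂ = {c} := by
      obtain ⟨b, hb⟩ := Finset.card_eq_one.mp (hq.2.1 u₂ (by simp)).2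
      rw [hb] at hcu ⊢
      rw [Finset.mem_singleton.mp hcu]
    obtain ⟨hg2, hg2h, hg2l, hg2κ, -⟩ := glue (H := H) (k := 1) B hg1 hq
      (by rw [hg1l, hjπ.2, hu₂c]) rfl
    refine ⟨_, hg2, ⟨by rw [hg2h]; exact hheadγ, ?_⟩, ?_⟩
    · rw [hg2l, List.getLast?_cons_cons, ← hlastγ]
      exact hjγ.2
    · rw [hg2κ, hg1κ0, kappa_cons₂, if_pos hF]
      omega
  · have hv₂c : v₂ = {c} := by
      obtain ⟨b, hb⟩ := Finset.card_eq_one.mp (hq.2.1 v₂ (by simp)).2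
      rw [hb] at hcv ⊢
      rw [Finset.mem_singleton.mp hcv]
    obtain ⟨hg2, hg2h, hg2l, hg2κ, -⟩ := glue (H := H) (k := 1) B hg1 hqv
      (by rw [hg1l, hjπ.2, hv₂c]) rfl
    refine ⟨_, hg2, ⟨by rw [hg2h]; exact hheadγ, ?_⟩, ?_⟩
    · rw [hg2l, ← hlastγ]
      exact hjγ.2
    · rw [hg2κ, hg1κ0]
      omega

end Aux4
/-- For a nodal separating block `B` of a simply connected combinatorial
strata structure: for every `i ∈ I` and every `{j} ∈ A_B(i)`, there is a 1-path `γ` in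
`H` joining `{i}` and `{j}` with `κ_B(γ) = 0`. -/
theorem ABset_joined_without_crossing
    {I : Type*} [Fintype I] [DecidableEq I] (H : Set (Finset I))
    (hH : IsCSS H) (hsc : SimplyConnected H)
    (D : NodalDatum H) (B : Set (Finset I)) (hB : IsSepBlock D B) :
    ∀ (i j : I), ({j} : Finset I) ∈ ABset H B i →
      ∃ γ : List (Finset I), IsKPath H 1 γ ∧
        Joins γ ({i} : Finset I) ({j} : Finset I) ∧ kappa B γ = 0 := by
  intro i j hj
  obtain ⟨-, γ₀, hp₀, hj₀, hev₀⟩ := hj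
  have hpar : ∀ γ : List (Finset I), IsKPath H 1 γ → Joins γ {i} {j} →
      Even (kappa B γ) := by
    intro γ hγ hjγ
    have h5 := joins_parity hH hsc hB hγ hp₀ hjγ hj₀
    rw [Nat.even_iff] at *
    omega
  have main : ∀ n : ℕ, ∀ γ : List (Finset I), IsKPath H 1 γ → Joins γ {i} {j} →
      kappa B γ ≤ n → ∃ γ', IsKPath H 1 γ' ∧ Joins γ' ({i} : Finset I) ({j} : Finset I) ∧
        kappa B γ' = 0 := by
    intro n
    induction n with
    | zero => intro γ hγ hjγ hle; exact ⟨γ, hγ, hjγ, Nat.le_zero.mp hle⟩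
    | succ n ihn =>
      intro γ hγ hjγ hle
      by_cases hz : kappa B γ = 0
      · exact ⟨γ, hγ, hjγ, hz⟩
      · have hev := hpar γ hγ hjγ
        have h2 : 2 ≤ kappa B γ := by rw [Nat.even_iff] at hev; omega
        obtain ⟨γ', hγ', hjγ', hlt⟩ := reduce_crossings hH hB hγ hjγ h2
        exact ihn γ' hγ' hjγ' (by omega)
  exact main (kappa B γ₀) γ₀ hp₀ hj₀ le_rfl
end
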